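/- Let λ_[1] ≥ λ_[n] > 0 be the largest and smallest eigenvalues of Σ, let cond(Σ) = λ_[1]/λ_[n] be its condition number, let x_MIN = Σ⁻¹e/(eᵀΣ⁻¹e) be the minimum-variance portfolio, and let x_EW = e/n be the equal-weighted portfolio. Then ‖x_MIN − x_EW‖₂ ≤ (1/√n) · cond(Σ) · ( cond(Σ) − 1 ). -/

import Mathlib

open Matrix

theorem keylem (n : ℕ) (A : Matrix (Fin n) (Fin n) ℝ) (hA : A.PosDef) (hAs : A.IsSymm)
    (lam1 lamn : ℝ)
    (hbetween : ∀ μ : ℝ, (∃ v : Fin n → ℝ, v ≠ 0 ∧ A *ᵥ v = μ • v) →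
      lamn ≤ μ ∧ μ ≤ lam1) :
    ∀ x : Fin n → ℝ, 0 ≤ (lam1 • x - A *ᵥ x) ⬝ᵥ (A *ᵥ x - lamn • x) := by
  classical
  have hH : A.IsHermitian := hA.1
  set b := hH.eigenvectorBasis with hb
  set μ := hH.eigenvalues with hmu
  set E := WithLp.equiv 2 (Fin n → ℝ) with hE
  have hbd : ∀ i, lamn ≤ μ i ∧ μ i ≤ lam1 := fun i =>
    hbetween (μ i) ⟨⇑(b i), by simpa using b.orthonormal.ne_zero i,
      hH.mulVec_eigenvectorBasis i⟩
  have dp : ∀ u v : Fin n → ℝ,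
      u ⬝ᵥ v = inner (𝕜 := ℝ) (E.symm u : EuclideanSpace ℝ (Fin n)) (E.symm v) := by
    intro u v
    simp [hE, PiLp.inner_apply, dotProduct, RCLike.inner_apply]
    exact Finset.sum_congr rfl fun i _ => mul_comm _ _
  have hmulvec : ∀ (i : Fin n) (x : Fin n → ℝ),
      (E (b i)) ⬝ᵥ (A *ᵥ x) = μ i * ((E (b i)) ⬝ᵥ x) := by
    intro i x
    rw [dotProduct_mulVec, ← mulVec_transpose, hAs.eq]
    have h := hH.mulVec_eigenvectorBasis i
    show (A *ᵥ (E (b i))) ⬝ᵥ x = _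
    rw [show A *ᵥ (E (b i)) = μ i • (E (b i)) from h]
    simp [smul_dotProduct]
  have repr_eq : ∀ (i : Fin n) (y : Fin n → ℝ),
      b.repr (E.symm y) i = (E (b i)) ⬝ᵥ y := by
    intro i y
    rw [b.repr_apply_apply, dp]
    simp [real_inner_comm]
  intro x
  rw [dp]
  have keyA : ∀ i, b.repr (E.symm (A *ᵥ x)) i = μ i * b.repr (E.symm x) i := by
    intro i; rw [repr_eq, hmulvec, repr_eq]
  have e1 : (E.symm (lam1 • x - A *ᵥ x) : EuclideanSpace ℝ (Fin n))
      = lam1 • (E.symm x) - E.symm (A *ᵥ x) := rfl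
  have e2 : (E.symm (A *ᵥ x - lamn • x) : EuclideanSpace ℝ (Fin n))
      = E.symm (A *ᵥ x) - lamn • (E.symm x) := rfl
  rw [e1, e2, ← b.repr.inner_map_map, map_sub, map_sub, _root_.map_smul, _root_.map_smul,
    PiLp.inner_apply]
  apply Finset.sum_nonneg
  intro i _
  simp only [PiLp.sub_apply, PiLp.smul_apply, smul_eq_mul, RCLike.inner_apply,
    starRingEnd_apply, star_trivial, keyA i]
  have h1 := (hbd i).1
  have h2 := (hbd i).2
  nlinarith [mul_nonneg (mul_nonneg (sub_nonneg.2 h2) (sub_nonneg.2 h1))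
    (sq_nonneg (b.repr (E.symm x) i))]


theorem stmt9 (n : ℕ) (hn : 1 ≤ n) (A : Matrix (Fin n) (Fin n) ℝ)
    (hA : A.PosDef) (hAs : A.IsSymm)
    (e : Fin n → ℝ) (he : e = fun _ => 1)
    (lam1 lamn : ℝ) (hlamn : 0 < lamn)
    (hlam1eig : ∃ v : Fin n → ℝ, v ≠ 0 ∧ A *ᵥ v = lam1 • v)
    (hlamneig : ∃ v : Fin n → ℝ, v ≠ 0 ∧ A *ᵥ v = lamn • v)
    (hbetween : ∀ μ : ℝ, (∃ v : Fin n → ℝ, v ≠ 0 ∧ A *ᵥ v = μ • v) →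
      lamn ≤ μ ∧ μ ≤ lam1)
    (xMIN xEW : Fin n → ℝ)
    (hxMIN : xMIN = (e ⬝ᵥ A⁻¹ *ᵥ e)⁻¹ • (A⁻¹ *ᵥ e))
    (hxEW : xEW = (n : ℝ)⁻¹ • e) :
    Real.sqrt ((xMIN - xEW) ⬝ᵥ (xMIN - xEW)) ≤
      (1 / Real.sqrt n) * (lam1 / lamn) * (lam1 / lamn - 1) := by
  have hl1n : lamn ≤ lam1 := (hbetween lam1 hlam1eig).1
  have hlam1 : 0 < lam1 := lt_of_lt_of_le hlamn hl1n
  have hn0 : (0:ℝ) < n := by exact_mod_cast hn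
  have he0 : e ≠ 0 := by
    rw [he]
    intro h
    have := congrFun h ⟨0, hn⟩
    simp at this
  have hBpd : (A⁻¹).PosDef := hA.inv
  set u : Fin n → ℝ := A⁻¹ *ᵥ e with hu
  set s : ℝ := e ⬝ᵥ u with hsdef
  have hs : 0 < s := by simpa using hBpd.dotProduct_mulVec_pos he0
  have hdet : IsUnit A.det := isUnit_iff_ne_zero.2 hA.det_pos.ne'
  have hAu : A *ᵥ u = e := by
    rw [hu, mulVec_mulVec, mul_nonsing_inv A hdet, one_mulVec]
  set w : ℝ := u ⬝ᵥ u with hwdef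
  have hwnn : 0 ≤ w := by
    rw [hwdef, dotProduct]
    exact Finset.sum_nonneg fun i _ => mul_self_nonneg _
  have hee : e ⬝ᵥ e = (n:ℝ) := by simp [he, dotProduct]
  have hue : u ⬝ᵥ e = s := by rw [hsdef, dotProduct_comm]
  -- main quadratic inequality
  have h0 := keylem n A hA hAs lam1 lamn hbetween u
  rw [hAu] at h0
  simp only [sub_dotProduct, dotProduct_sub, smul_dotProduct, dotProduct_smul,
    smul_eq_mul] at h0
  rw [hue, hee, hsdef] at h0
  have hw : lam1 * lamn * w ≤ (lam1 + lamn) * s - n := by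
    rw [hwdef]; nlinarith [h0]
  -- the squared norm of the difference
  have hv : (xMIN - xEW) ⬝ᵥ (xMIN - xEW) = w / s^2 - 1/n := by
    rw [hxMIN, hxEW]
    simp only [sub_dotProduct, dotProduct_sub, smul_dotProduct, dotProduct_smul,
      smul_eq_mul]
    rw [hue, hee, ← hwdef]
    field_simp
    ring
  clear_value u s w
  clear hxMIN hxEW hu hsdef hwdef hBpd hdet hAu h0 hue hee he0 he hbetween hlam1eig hlamneig hAs hA A e u
  obtain ⟨K, hK⟩ : ∃ K : ℝ, K = (lam1/lamn)^2 * (lam1/lamn - 1)^2 := ⟨_, rfl⟩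
  have hκ : 1 ≤ lam1 / lamn := (one_le_div hlamn).2 hl1n
  have hR : 0 ≤ 1 / Real.sqrt n * (lam1 / lamn) * (lam1 / lamn - 1) :=
    mul_nonneg (mul_nonneg (by positivity) (by linarith)) (by linarith)
  have hR2 : (1 / Real.sqrt n * (lam1 / lamn) * (lam1 / lamn - 1))^2 = K / n := by
    rw [hK, mul_pow, mul_pow, div_pow, one_pow, Real.sq_sqrt hn0.le]
    ring
  have base : (lam1 + lamn)^2 / 4 ≤ lam1 * lamn * (K + 1) := by
    rw [hK]
    have h3 : lamn^3 ≤ lam1^3 := pow_le_pow_left₀ hlamn.le hl1n 3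
    have hb4 : (0:ℝ) < lamn^4 := by positivity
    have keyq : (lam1/lamn)^2*(lam1/lamn-1)^2 = (lam1*(lam1-lamn))^2 / lamn^4 := by
      field_simp
    rw [keyq, div_add' _ _ _ hb4.ne', ← mul_div_assoc,
      div_le_div_iff₀ (by norm_num : (0:ℝ) < 4) hb4]
    nlinarith [mul_nonneg (mul_nonneg (sub_nonneg.2 h3) hlamn.le) (sq_nonneg (lam1-lamn)),
      sq_nonneg (lam1-lamn), mul_pos hlam1 hlamn]
  have c1 : lam1*lamn*(w*n) ≤ ((lam1+lamn)*s - n)*n := by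
    nlinarith [mul_le_mul_of_nonneg_right hw hn0.le]
  have c2 : ((lam1+lamn)*s - n)*n ≤ (lam1+lamn)^2*s^2/4 := by
    nlinarith [sq_nonneg ((lam1+lamn)*s - 2*n)]
  have c3 : (lam1+lamn)^2*s^2/4 ≤ lam1*lamn*((K+1)*s^2) := by
    have h := mul_le_mul_of_nonneg_right base (sq_nonneg s)
    calc (lam1+lamn)^2*s^2/4 = (lam1+lamn)^2/4 * s^2 := by ring
      _ ≤ lam1*lamn*(K+1) * s^2 := h
      _ = lam1*lamn*((K+1)*s^2) := by ring
  have hwn : w * n ≤ (K+1)*s^2 :=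
    le_of_mul_le_mul_left (by linarith : lam1*lamn*(w*(n:ℝ)) ≤ lam1*lamn*((K+1)*s^2))
      (mul_pos hlam1 hlamn)
  have hstep : w/s^2 ≤ (K+1)/n := (div_le_div_iff₀ (pow_pos hs 2) hn0).2 hwn
  have hle : (xMIN - xEW) ⬝ᵥ (xMIN - xEW) ≤
      (1 / Real.sqrt n * (lam1 / lamn) * (lam1 / lamn - 1))^2 := by
    rw [hv, hR2]
    have hsplit : (K+1)/(n:ℝ) = K/n + 1/n := by ring
    rw [hsplit] at hstep
    linarith
  calc Real.sqrt ((xMIN - xEW) ⬝ᵥ (xMIN - xEW))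
      ≤ Real.sqrt ((1 / Real.sqrt n * (lam1 / lamn) * (lam1 / lamn - 1))^2) :=
        Real.sqrt_le_sqrt hle
    _ = 1 / Real.sqrt n * (lam1 / lamn) * (lam1 / lamn - 1) := Real.sqrt_sq hR
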